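/- Let A be a real symmetric n×n matrix with eigenvalues λ₁,…,λₙ, set H = tr A, and suppose H > 0 and there is ε > 0 with λᵢ ≥ εH for every i. Then H·tr(A³) − (tr(A²))² ≥ n·ε²·H²·(tr(A²) − H²/n). -/

import Mathlib

open Matrix Finset

lemma trace_pow_eq {n : ℕ} (A : Matrix (Fin n) (Fin n) ℝ) (hA : A.IsHermitian) (k : ℕ) :
    (A ^ k).trace = ∑ i, hA.eigenvalues i ^ k := by
  set U : Matrix (Fin n) (Fin n) ℝ := (hA.eigenvectorUnitary : Matrix (Fin n) (Fin n) ℝ) with hUdef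
  have hU : star U * U = 1 := (Matrix.mem_unitaryGroup_iff').mp hA.eigenvectorUnitary.2
  have hU2 : U * star U = 1 := (Matrix.mem_unitaryGroup_iff).mp hA.eigenvectorUnitary.2
  set D : Matrix (Fin n) (Fin n) ℝ := diagonal (RCLike.ofReal ∘ hA.eigenvalues) with hDdef
  have hpow : A ^ k = U * D ^ k * star U := by
    induction k with
    | zero => simp [hU2]
    | succ m ih =>
      rw [pow_succ, ih]
      conv_lhs => rw [hA.spectral_theorem, Unitary.conjStarAlgAut_apply]
      rw [← hUdef, ← hDdef, pow_succ, mul_assoc (U * D ^ m),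
        show star U * (U * D * star U) = D * star U by rw [← mul_assoc, ← mul_assoc, hU, one_mul]]
      simp only [mul_assoc]
  rw [hpow, trace_mul_cycle, hU, one_mul, diagonal_pow, trace_diagonal]
  simp [Pi.pow_apply]

theorem stmt_2 {n : ℕ} (A : Matrix (Fin n) (Fin n) ℝ) (hA : A.IsHermitian)
    (htr : 0 < A.trace) (ε : ℝ) (hε : 0 < ε)
    (heig : ∀ i, ε * A.trace ≤ hA.eigenvalues i) :
    (n : ℝ) * ε ^ 2 * A.trace ^ 2 * ((A ^ 2).trace - A.trace ^ 2 / n) ≤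
      A.trace * (A ^ 3).trace - ((A ^ 2).trace) ^ 2 := by
  set l := hA.eigenvalues with hl
  have h1 : A.trace = ∑ i, l i := by
    have := trace_pow_eq A hA 1; simpa using this
  have h2 : (A ^ 2).trace = ∑ i, l i ^ 2 := trace_pow_eq A hA 2
  have h3 : (A ^ 3).trace = ∑ i, l i ^ 3 := trace_pow_eq A hA 3
  rw [h1, h2, h3]
  set H := ∑ i, l i with hH
  have hHpos : 0 < H := h1 ▸ htr
  have hn : 0 < (n : ℝ) := by
    rcases Nat.eq_zero_or_pos n with h | h
    · exfalso; subst h; simp [hH] at hHpos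
    · exact_mod_cast h
  have hlow : ∀ i, ε * H ≤ l i := fun i => h1 ▸ heig i
  have key : ∑ i, ∑ j, (ε * H)^2 * (l i - l j)^2 ≤ ∑ i, ∑ j, l i * l j * (l i - l j)^2 := by
    refine Finset.sum_le_sum fun i _ => Finset.sum_le_sum fun j _ => ?_
    refine mul_le_mul_of_nonneg_right ?_ (sq_nonneg _)
    have h0 : 0 < ε * H := mul_pos hε hHpos
    calc (ε * H)^2 = (ε*H) * (ε*H) := sq (ε*H) ▸ sq (ε*H) ▸ by ring
    _ ≤ l i * l j := mul_le_mul (hlow i) (hlow j) h0.le ((h0.trans_le (hlow i)).le)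
  have idL : ∑ i, ∑ j, (l i - l j)^2 = 2*((n:ℝ) * ∑ i, l i^2) - 2*H^2 := by
    have hp : ∀ i j : Fin n, (l i - l j)^2 = l i^2 + l j^2 - 2*(l i * l j) := fun i j => by ring
    simp only [hp, Finset.sum_sub_distrib, Finset.sum_add_distrib, Finset.sum_const,
      Finset.card_univ, Fintype.card_fin, nsmul_eq_mul, ← Finset.mul_sum, ← Finset.sum_mul, hH]
    ring
  have idR : ∑ i, ∑ j, l i * l j * (l i - l j)^2
      = 2*(H * ∑ i, l i^3) - 2*(∑ i, l i^2)^2 := by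
    have hp : ∀ i j : Fin n, l i * l j * (l i - l j)^2
        = l i^3 * l j + l i * l j^3 - 2*(l i^2 * l j^2) := fun i j => by ring
    simp only [hp, Finset.sum_sub_distrib, Finset.sum_add_distrib, ← Finset.mul_sum,
      ← Finset.sum_mul, hH]
    rw [show ((∑ i, l i^2)^2 : ℝ) = (∑ i, l i^2) * (∑ i, l i^2) by ring]
    ring
  have hLHS : ∑ i, ∑ j, (ε * H)^2 * (l i - l j)^2
      = (ε*H)^2 * (2*((n:ℝ) * ∑ i, l i^2) - 2*H^2) := by
    simp only [← Finset.mul_sum]; rw [idL]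
  have hdiv : (n:ℝ) * ((∑ i, l i^2) - H^2 / n) = (n:ℝ) * (∑ i, l i^2) - H^2 := by
    field_simp
  rw [hLHS, idR] at key
  have expand : ((n : ℝ)) * ε ^ 2 * H ^ 2 * ((∑ i, l i^2) - H ^ 2 / n)
      = ε^2 * H^2 * ((n:ℝ) * (∑ i, l i^2) - H^2) := by
    rw [← hdiv]; ring
  rw [expand]
  nlinarith [key]
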